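/- Bareiss identity: Let M be an n × n matrix over an integral domain and suppose all leading principal minors M[1..k, 1..k] have nonzero determinant for k < n. Define M^{(0)} = M and iteratively m^{(k)}_{ij} = (m^{(k-1)}_{kk} m^{(k-1)}_{ij} − m^{(k-1)}_{ik} m^{(k-1)}_{kj}) / m^{(k-2)}_{k-1,k-1} for i, j > k (with m^{(−1)}_{00} = 1). Then every such division is exact in the domain, and the final entry m^{(n-1)}_{nn} equals det(M). -/

import Mathlib

open Matrix

namespace BareissAux

/-- keep map: keep the `inl`s and send the single `inr` to `inr x`. -/
def keep {m : ℕ} (x : Fin 2) : Fin m ⊕ Fin 1 → Fin m ⊕ Fin 2 :=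
  Sum.map id fun _ => x

def other : Fin 2 → Fin 2 := fun x => if x = 0 then 1 else 0

lemma funeq {m : ℕ} (x : Fin 2) :
    (fun u : Fin m ⊕ Fin 1 => (finSumFinEquiv.symm : Fin (m + 2) ≃ Fin m ⊕ Fin 2)
        ((finSumFinEquiv (Sum.inr x) : Fin (m + 2)).succAbove (finSumFinEquiv u)))
      = keep (m := m) (other x) := by
  funext u
  rw [finSumFinEquiv_apply_right]
  rcases u with t | o
  · have h1 : finSumFinEquiv (Sum.inl t : Fin m ⊕ Fin 1) = Fin.castAdd 1 t :=
      finSumFinEquiv_apply_left t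
    rw [h1]
    have h2 : (Fin.natAdd m x : Fin (m + 2)).succAbove (Fin.castAdd 1 t)
        = Fin.castAdd 2 t := by
      rw [Fin.succAbove_of_castSucc_lt]
      · ext; simp
      · simp [Fin.lt_def]
        omega
    rw [h2]
    simp [keep, finSumFinEquiv_symm_apply_castAdd]
  · have ho : o = 0 := Subsingleton.elim _ _
    subst ho
    have h1 : finSumFinEquiv (Sum.inr 0 : Fin m ⊕ Fin 1) = Fin.natAdd m 0 :=
      finSumFinEquiv_apply_right 0
    rw [h1, Equiv.symm_apply_eq]
    have hk : keep (m := m) (other x) (Sum.inr 0) = Sum.inr (other x) := rfl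
    rw [hk, finSumFinEquiv_apply_right]
    have hx : (x : ℕ) = 0 ∨ (x : ℕ) = 1 := by omega
    ext
    rcases hx with hx | hx <;>
      simp [Fin.succAbove, Fin.lt_def, other, Fin.ext_iff, hx]

variable {S : Type*} [CommRing S]

lemma adj_entry {m : ℕ} (A : Matrix (Fin m ⊕ Fin 2) (Fin m ⊕ Fin 2) S) (s x : Fin 2) :
    adjugate A (Sum.inr s) (Sum.inr x)
      = (-1) ^ ((s : ℕ) + (x : ℕ)) *
          (A.submatrix (keep (other x)) (keep (other s))).det := by
  classical
  have hadj := adjugate_submatrix_equiv_self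
      (finSumFinEquiv.symm : Fin (m + 2) ≃ Fin m ⊕ Fin 2) A
  have h0 : adjugate A (Sum.inr s) (Sum.inr x)
      = adjugate (A.submatrix (finSumFinEquiv.symm : Fin (m + 2) ≃ Fin m ⊕ Fin 2)
          (finSumFinEquiv.symm : Fin (m + 2) ≃ Fin m ⊕ Fin 2))
        (finSumFinEquiv (Sum.inr s)) (finSumFinEquiv (Sum.inr x)) := by
    rw [hadj]; simp
  rw [h0, adjugate_fin_succ_eq_det_submatrix]
  have hsgn : ((finSumFinEquiv (Sum.inr x) : Fin (m + 2)) : ℕ)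
      + ((finSumFinEquiv (Sum.inr s) : Fin (m + 2)) : ℕ) = 2 * m + ((s : ℕ) + (x : ℕ)) := by
    simp [finSumFinEquiv_apply_right]; omega
  rw [hsgn, pow_add, pow_mul, neg_one_sq, one_pow, one_mul]
  congr 1
  rw [submatrix_submatrix]
  rw [← det_submatrix_equiv_self (finSumFinEquiv : Fin m ⊕ Fin 1 ≃ Fin (m + 1)), submatrix_submatrix]
  congr 1
  have hx' : (⇑(finSumFinEquiv.symm : Fin (m + 2) ≃ Fin m ⊕ Fin 2) ∘ (finSumFinEquiv (Sum.inr x) : Fin (m + 2)).succAbove)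
        ∘ ⇑(finSumFinEquiv : Fin m ⊕ Fin 1 ≃ Fin (m + 1)) = keep (m := m) (other x) := funeq x
  have hs' : (⇑(finSumFinEquiv.symm : Fin (m + 2) ≃ Fin m ⊕ Fin 2) ∘ (finSumFinEquiv (Sum.inr s) : Fin (m + 2)).succAbove)
        ∘ ⇑(finSumFinEquiv : Fin m ⊕ Fin 1 ≃ Fin (m + 1)) = keep (m := m) (other s) := funeq s
  rw [hx', hs']

lemma key_mul {m : ℕ} (A : Matrix (Fin m ⊕ Fin 2) (Fin m ⊕ Fin 2) S) :
    A.det * (Matrix.of fun s x : Fin 2 => adjugate A (Sum.inr s) (Sum.inr x)).det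
      = (A.submatrix Sum.inl Sum.inl).det * A.det ^ 2 := by
  classical
  set P : Matrix (Fin m) (Fin 2) S :=
    Matrix.of fun t x => adjugate A (Sum.inl t) (Sum.inr x) with hP
  set Q : Matrix (Fin 2) (Fin 2) S :=
    Matrix.of fun s x => adjugate A (Sum.inr s) (Sum.inr x) with hQ
  set D : Matrix (Fin m ⊕ Fin 2) (Fin m ⊕ Fin 2) S := fromBlocks 1 P 0 Q with hD
  have hDcol : ∀ (r : Fin m ⊕ Fin 2) (y : Fin 2),
      D r (Sum.inr y) = adjugate A r (Sum.inr y) := by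
    rintro (t | u) y <;> rfl
  have hAD : A * D
      = fromBlocks (A.submatrix Sum.inl Sum.inl) 0 (A.submatrix Sum.inr Sum.inl)
          (A.det • (1 : Matrix (Fin 2) (Fin 2) S)) := by
    ext p q
    rcases q with t | y
    · have : (A * D) p (Sum.inl t) = A p (Sum.inl t) := by
        rw [Matrix.mul_apply, Fintype.sum_sum_type]
        have h1 : ∀ t' : Fin m, A p (Sum.inl t') * D (Sum.inl t') (Sum.inl t)
            = if t' = t then A p (Sum.inl t) else 0 := by
          intro t'
          by_cases h : t' = t <;>
            simp [hD, Matrix.fromBlocks, Matrix.one_apply, h]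
        have h2 : ∀ u : Fin 2, A p (Sum.inr u) * D (Sum.inr u) (Sum.inl t) = 0 := by
          intro u; simp [hD, Matrix.fromBlocks]
        simp only [h1, h2, Finset.sum_const_zero, add_zero, Finset.sum_ite_eq',
          Finset.mem_univ, if_true]
      rw [this]
      rcases p with p' | p' <;> simp [Matrix.fromBlocks]
    · have : (A * D) p (Sum.inr y) = (A * adjugate A) p (Sum.inr y) := by
        rw [Matrix.mul_apply, Matrix.mul_apply]
        exact Finset.sum_congr rfl fun r _ => by rw [hDcol]
      rw [this, Matrix.mul_adjugate]
      rcases p with p' | p' <;>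
        simp [Matrix.fromBlocks, Matrix.one_apply, Matrix.smul_apply]
  have hdetD : D.det = Q.det := by
    rw [hD, Matrix.det_fromBlocks_zero₂₁, Matrix.det_one, one_mul]
  have hdetAD : (A * D).det
      = (A.submatrix Sum.inl Sum.inl).det * A.det ^ 2 := by
    rw [hAD, Matrix.det_fromBlocks_zero₁₂, Matrix.det_smul, Matrix.det_one]
    simp [Fintype.card_fin]
  calc A.det * Q.det = A.det * D.det := by rw [hdetD]
    _ = (A * D).det := (Matrix.det_mul A D).symm
    _ = (A.submatrix Sum.inl Sum.inl).det * A.det ^ 2 := hdetAD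

lemma dj_domain {m : ℕ} {S : Type*} [CommRing S] [IsDomain S]
    (A : Matrix (Fin m ⊕ Fin 2) (Fin m ⊕ Fin 2) S) (hA : A.det ≠ 0) :
    A.det * (A.submatrix Sum.inl Sum.inl).det =
      (A.submatrix (keep 0) (keep 0)).det * (A.submatrix (keep 1) (keep 1)).det -
        (A.submatrix (keep 1) (keep 0)).det * (A.submatrix (keep 0) (keep 1)).det := by
  classical
  have h := key_mul A
  have hQ : (Matrix.of fun s x : Fin 2 => adjugate A (Sum.inr s) (Sum.inr x)).det
      = (A.submatrix (keep 0) (keep 0)).det * (A.submatrix (keep 1) (keep 1)).det -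
        (A.submatrix (keep 1) (keep 0)).det * (A.submatrix (keep 0) (keep 1)).det := by
    rw [Matrix.det_fin_two]
    simp only [Matrix.of_apply]
    rw [adj_entry, adj_entry, adj_entry, adj_entry]
    norm_num [other]
    ring
  have h2 : A.det * ((A.submatrix (keep 0) (keep 0)).det * (A.submatrix (keep 1) (keep 1)).det -
        (A.submatrix (keep 1) (keep 0)).det * (A.submatrix (keep 0) (keep 1)).det)
      = A.det * ((A.submatrix Sum.inl Sum.inl).det * A.det) := by
    rw [← hQ, h]; ring
  have := mul_left_cancel₀ hA h2
  rw [this]; ring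

lemma dj_sum {m : ℕ} (A : Matrix (Fin m ⊕ Fin 2) (Fin m ⊕ Fin 2) S) :
    A.det * (A.submatrix Sum.inl Sum.inl).det =
      (A.submatrix (keep 0) (keep 0)).det * (A.submatrix (keep 1) (keep 1)).det -
        (A.submatrix (keep 1) (keep 0)).det * (A.submatrix (keep 0) (keep 1)).det := by
  classical
  have hG := dj_domain (Matrix.mvPolynomialX (Fin m ⊕ Fin 2) (Fin m ⊕ Fin 2) ℤ)
      (Matrix.det_mvPolynomialX_ne_zero _ _)
  have hGA : (Matrix.mvPolynomialX (Fin m ⊕ Fin 2) (Fin m ⊕ Fin 2) ℤ).map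
      (MvPolynomial.aeval fun p : (Fin m ⊕ Fin 2) × (Fin m ⊕ Fin 2) => A p.1 p.2) = A := by
    have h := Matrix.mvPolynomialX_mapMatrix_aeval (R := ℤ) A
    rwa [AlgHom.mapMatrix_apply] at h
  have key := congrArg
    (MvPolynomial.aeval (R := ℤ) fun p : (Fin m ⊕ Fin 2) × (Fin m ⊕ Fin 2) => A p.1 p.2) hG
  simp only [_root_.map_mul, map_sub, AlgHom.map_det, AlgHom.mapMatrix_apply, ← Matrix.submatrix_map, hGA] at key
  exact key

/-- row/column selection map for the bordered minor `f k i j`. -/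
def bmap {n : ℕ} (k i : ℕ) (hk : k < n) (hi : i - 1 < n) : Fin (k + 1) → Fin n :=
  fun t => ⟨if (t : ℕ) < k then (t : ℕ) else i - 1,
    by split_ifs with h'; exacts [h'.trans hk, hi]⟩

lemma bmap_val {n : ℕ} (k i : ℕ) (hk : k < n) (hi : i - 1 < n) (t : Fin (k + 1)) :
    ((bmap k i hk hi t : Fin n) : ℕ) = if (t : ℕ) < k then (t : ℕ) else i - 1 := rfl

/-- The Bareiss entries: `bf M k i j = m^{(k)}_{ij}` (1-based `i`, `j`). -/
def bf {n : ℕ} (M : Matrix (Fin n) (Fin n) S) (k i j : ℕ) : S :=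
  if h : k < n ∧ i - 1 < n ∧ j - 1 < n then
    (M.submatrix (bmap k i h.1 h.2.1) (bmap k j h.1 h.2.2)).det
  else 0

/-- sum-world row selection map for the bordered matrix. -/
def rmap {n : ℕ} (k i : ℕ) (h1 : k - 1 ≤ n) (h2 : k - 1 < n) (hi : i - 1 < n) :
    Fin (k - 1) ⊕ Fin 2 → Fin n :=
  Sum.elim (fun t => ⟨t, lt_of_lt_of_le t.2 h1⟩)
    (fun v => if (v : ℕ) = 0 then ⟨k - 1, h2⟩ else ⟨i - 1, hi⟩)

end BareissAux

open BareissAux in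
/-- Bareiss algorithm: exactness of every division and correctness of the final entry.
`f k i j` represents the entry `m^{(k)}_{ij}` (with `1`-based row/column indices
`i, j ∈ {1, …, n}`), and the divisor at step `k` is `m^{(k-2)}_{k-1,k-1}`
(interpreted as `1` when `k = 1`).  Exact division is expressed by the divisibility
claim together with the multiplicative form of the recursion. -/
theorem stmt_14 {R : Type*} [CommRing R] [IsDomain R] {n : ℕ} (hn : 1 ≤ n)
    (M : Matrix (Fin n) (Fin n) R)
    (hminors : ∀ k : ℕ, ∀ hk : k < n,
      (M.submatrix (Fin.castLE hk.le) (Fin.castLE hk.le)).det ≠ 0) :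
    ∃ f : ℕ → ℕ → ℕ → R,
      (∀ i j : ℕ, ∀ hi : i < n, ∀ hj : j < n,
        f 0 (i + 1) (j + 1) = M ⟨i, hi⟩ ⟨j, hj⟩) ∧
      (∀ k i j : ℕ, 1 ≤ k → k ≤ n - 1 → k < i → i ≤ n → k < j → j ≤ n →
        ((if k = 1 then (1 : R) else f (k - 2) (k - 1) (k - 1)) ∣
            (f (k - 1) k k * f (k - 1) i j - f (k - 1) i k * f (k - 1) k j)) ∧
          (if k = 1 then (1 : R) else f (k - 2) (k - 1) (k - 1)) * f k i j =
            f (k - 1) k k * f (k - 1) i j - f (k - 1) i k * f (k - 1) k j) ∧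
      f (n - 1) n n = M.det := by
  classical
  refine ⟨bf M, ?_, ?_, ?_⟩
  · -- base case
    intro i j hi hj
    have h : (0:ℕ) < n ∧ i + 1 - 1 < n ∧ j + 1 - 1 < n := ⟨hn, by omega, by omega⟩
    rw [bf, dif_pos h, Matrix.det_fin_one, Matrix.submatrix_apply]
    congr 1 <;> apply Fin.ext <;> simp [bmap]
  · -- recursion step
    intro k i j hk1 hkn hki hin hkj hjn
    have hkltn : k < n := by omega
    have hcond : k < n ∧ i - 1 < n ∧ j - 1 < n := ⟨hkltn, by omega, by omega⟩
    have h1 : k - 1 ≤ n := by omega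
    have h2 : k - 1 < n := by omega
    have hi' : i - 1 < n := by omega
    have hj' : j - 1 < n := by omega
    set ρ := rmap (n := n) k i h1 h2 hi' with hρ
    set γ := rmap (n := n) k j h1 h2 hj' with hγ
    set B := M.submatrix ρ γ with hBdef
    have hdj := dj_sum (S := R) B
    set E : Fin (k - 1) ⊕ Fin 2 ≃ Fin (k + 1) :=
      (finSumFinEquiv.trans (finCongr (by omega))) with hE
    -- B.det = bf M k i j
    have hB : bf M k i j = B.det := by
      rw [bf, dif_pos hcond,
        ← Matrix.det_submatrix_equiv_self E
          (M.submatrix (bmap k i hcond.1 hcond.2.1) (bmap k j hcond.1 hcond.2.2))]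
      congr 1
      ext a b
      simp only [Matrix.submatrix_apply, hBdef]
      have hra : bmap k i hcond.1 hcond.2.1 (E a) = ρ a := by
        apply Fin.ext
        rcases a with t | v
        · have ht := t.isLt
          simp [hE, bmap, hρ, rmap, Equiv.trans_apply]
          omega
        · have hv : (v : ℕ) = 0 ∨ (v : ℕ) = 1 := by omega
          rcases hv with hv | hv <;>
            simp [hE, bmap, hρ, rmap, Equiv.trans_apply, Fin.ext_iff, hv, -Fin.val_eq_zero_iff] <;> omega
      have hcb : bmap k j hcond.1 hcond.2.2 (E b) = γ b := by
        apply Fin.ext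
        rcases b with t | v
        · have ht := t.isLt
          simp [hE, bmap, hγ, rmap, Equiv.trans_apply]
          omega
        · have hv : (v : ℕ) = 0 ∨ (v : ℕ) = 1 := by omega
          rcases hv with hv | hv <;>
            simp [hE, bmap, hγ, rmap, Equiv.trans_apply, Fin.ext_iff, hv, -Fin.val_eq_zero_iff] <;> omega
      rw [hra, hcb]
    -- divisor
    have hdivisor : (if k = 1 then (1:R) else bf M (k - 2) (k - 1) (k - 1))
        = (B.submatrix Sum.inl Sum.inl).det := by
      by_cases hk : k = 1
      · subst hk
        rw [if_pos rfl]
        exact (Matrix.det_fin_zero).symm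
      · rw [if_neg hk]
        have hcond2 : k - 2 < n ∧ k - 1 - 1 < n ∧ k - 1 - 1 < n := ⟨by omega, by omega, by omega⟩
        rw [bf, dif_pos hcond2,
          ← Matrix.det_submatrix_equiv_self (finCongr (by omega : k - 2 + 1 = k - 1))
            (B.submatrix Sum.inl Sum.inl)]
        congr 1
        ext a b
        simp only [Matrix.submatrix_apply, hBdef]
        have hra : bmap (k-2) (k-1) hcond2.1 hcond2.2.1 a = ρ (Sum.inl (finCongr (by omega : k - 2 + 1 = k - 1) a)) := by
          apply Fin.ext
          have ht := a.isLt
          simp [bmap, hρ, rmap]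
          omega
        have hcb : bmap (k-2) (k-1) hcond2.1 hcond2.2.2 b = γ (Sum.inl (finCongr (by omega : k - 2 + 1 = k - 1) b)) := by
          apply Fin.ext
          have ht := b.isLt
          simp [bmap, hγ, rmap]
          omega
        rw [hra, hcb]
    -- the four size-k minors
    have hminor : ∀ (x y : Fin 2) (a b : ℕ) (ha : a - 1 < n) (hb : b - 1 < n),
        a - 1 = (if (x:ℕ) = 0 then k - 1 else i - 1) →
        b - 1 = (if (y:ℕ) = 0 then k - 1 else j - 1) →
        bf M (k - 1) a b = (B.submatrix (keep x) (keep y)).det := by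
      intro x y a b ha hb hax hby
      have hcond3 : k - 1 < n ∧ a - 1 < n ∧ b - 1 < n := ⟨h2, ha, hb⟩
      rw [bf, dif_pos hcond3,
        ← Matrix.det_submatrix_equiv_self
          ((finSumFinEquiv : Fin (k - 1) ⊕ Fin 1 ≃ Fin (k - 1 + 1)).symm)
          (B.submatrix (keep x) (keep y))]
      congr 1
      ext p q
      obtain ⟨u, rfl⟩ := (finSumFinEquiv : Fin (k - 1) ⊕ Fin 1 ≃ Fin (k - 1 + 1)).surjective p
      obtain ⟨w, rfl⟩ := (finSumFinEquiv : Fin (k - 1) ⊕ Fin 1 ≃ Fin (k - 1 + 1)).surjective q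
      simp only [Matrix.submatrix_apply, hBdef, Equiv.symm_apply_apply]
      have hra : bmap (k-1) a hcond3.1 hcond3.2.1 (finSumFinEquiv u) = ρ (keep x u) := by
        apply Fin.ext
        rcases u with t | o
        · have ht := t.isLt
          simp [bmap, hρ, rmap, keep]
          try omega
        · have ho : o = 0 := Subsingleton.elim _ _
          subst ho
          have hx : (x : ℕ) = 0 ∨ (x : ℕ) = 1 := by omega
          rcases hx with hx | hx <;>
            · rw [hx] at hax
              simp [bmap, hρ, rmap, keep, Fin.ext_iff, hx, hax, -Fin.val_eq_zero_iff] <;> omega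
      have hcb : bmap (k-1) b hcond3.1 hcond3.2.2 (finSumFinEquiv w) = γ (keep y w) := by
        apply Fin.ext
        rcases w with t | o
        · have ht := t.isLt
          simp [bmap, hγ, rmap, keep]
          try omega
        · have ho : o = 0 := Subsingleton.elim _ _
          subst ho
          have hy : (y : ℕ) = 0 ∨ (y : ℕ) = 1 := by omega
          rcases hy with hy | hy <;>
            · rw [hy] at hby
              simp [bmap, hγ, rmap, keep, Fin.ext_iff, hy, hby, -Fin.val_eq_zero_iff] <;> omega
      rw [hra, hcb]
    have h00 : bf M (k-1) k k = (B.submatrix (keep 0) (keep 0)).det :=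
      hminor 0 0 k k (by omega) (by omega) (by simp) (by simp)
    have h11 : bf M (k-1) i j = (B.submatrix (keep 1) (keep 1)).det :=
      hminor 1 1 i j (by omega) (by omega) (by simp) (by simp)
    have h10 : bf M (k-1) i k = (B.submatrix (keep 1) (keep 0)).det :=
      hminor 1 0 i k (by omega) (by omega) (by simp) (by simp)
    have h01 : bf M (k-1) k j = (B.submatrix (keep 0) (keep 1)).det :=
      hminor 0 1 k j (by omega) (by omega) (by simp) (by simp)
    have main : (if k = 1 then (1:R) else bf M (k - 2) (k - 1) (k - 1)) * bf M k i j
        = bf M (k-1) k k * bf M (k-1) i j - bf M (k-1) i k * bf M (k-1) k j := by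
      rw [hdivisor, hB, h00, h11, h10, h01, mul_comm]
      exact hdj
    exact ⟨⟨bf M k i j, main.symm⟩, main⟩
  · -- final value
    have h : n - 1 < n ∧ n - 1 < n ∧ n - 1 < n := ⟨by omega, by omega, by omega⟩
    rw [bf, dif_pos h,
      ← Matrix.det_submatrix_equiv_self (finCongr (by omega : n - 1 + 1 = n)) M]
    congr 1
    ext a b
    simp only [Matrix.submatrix_apply]
    have hra : bmap (n-1) n h.1 h.2.1 a = finCongr (by omega : n - 1 + 1 = n) a := by
      apply Fin.ext
      have ht := a.isLt
      simp [bmap]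
      omega
    have hcb : bmap (n-1) n h.1 h.2.2 b = finCongr (by omega : n - 1 + 1 = n) b := by
      apply Fin.ext
      have ht := b.isLt
      simp [bmap]
      omega
    rw [hra, hcb]
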